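/- arXiv:0812.4637 — 2 statements merged into one kernel-verified Lean document; each statement's English description precedes it below -/
import Mathlib

section
/- Let k_1 ≤ k_2 ≤ ... ≤ k_m be positive integers, let d be an integer with 1 ≤ d ≤ m and Σ_{i=1}^d k_i > (d-1)·k_d, let s_1, ..., s_d be non-negative integers, and let J_0 be a subset of { i : d < i ≤ m } such that Σ_{i=1}^d s_i·k_i = Σ_{i=1}^d k_i + Σ_{i ∈ J_0} k_i. Then Σ_{i=1}^d s_i ≥ d + |J_0|. -/
/-- Chain of inequalities in the proof of Theorem `t:reallength2`: indices
`0, …, m-1` here correspond to `1, …, m` in the paper.  If `k` is nondecreasing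
and positive on `{0, …, m-1}`, `1 ≤ d ≤ m`, `∑_{i<d} k i > (d-1) * k (d-1)`,
`J₀ ⊆ {i | d ≤ i < m}`, and `∑_{i<d} s i * k i = ∑_{i<d} k i + ∑_{i∈J₀} k i`,
then `∑_{i<d} s i ≥ d + |J₀|`. -/
theorem stmt3 (m d : ℕ) (hd1 : 1 ≤ d) (hdm : d ≤ m) (k s : ℕ → ℕ)
    (hkpos : ∀ i, i < m → 0 < k i)
    (hkmono : ∀ i j, i ≤ j → j < m → k i ≤ k j)
    (hbig : (d - 1) * k (d - 1) < ∑ i ∈ Finset.range d, k i)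
    (J₀ : Finset ℕ) (hJ₀ : ∀ i ∈ J₀, d ≤ i ∧ i < m)
    (hsum : ∑ i ∈ Finset.range d, s i * k i
      = ∑ i ∈ Finset.range d, k i + ∑ i ∈ J₀, k i) :
    d + J₀.card ≤ ∑ i ∈ Finset.range d, s i := by
  set K := k (d - 1) with hK
  have hdm' : d - 1 < m := by omega
  have hKpos : 0 < K := hkpos _ hdm'
  have h1 : ∑ i ∈ Finset.range d, s i * k i ≤ (∑ i ∈ Finset.range d, s i) * K := by
    rw [Finset.sum_mul]
    apply Finset.sum_le_sum
    intro i hi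
    have hi' : i < d := Finset.mem_range.mp hi
    exact Nat.mul_le_mul_left _ (hkmono i (d - 1) (by omega) hdm')
  have h2 : J₀.card * K ≤ ∑ i ∈ J₀, k i := by
    calc J₀.card * K = ∑ _i ∈ J₀, K := by rw [Finset.sum_const, smul_eq_mul]
    _ ≤ ∑ i ∈ J₀, k i := by
      apply Finset.sum_le_sum
      intro i hi
      obtain ⟨h3, h4⟩ := hJ₀ i hi
      exact hkmono (d - 1) i (by omega) h4
  have key : (d - 1 + J₀.card) * K < (∑ i ∈ Finset.range d, s i) * K := by
    calc (d - 1 + J₀.card) * K = (d - 1) * K + J₀.card * K := by ring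
    _ < ∑ i ∈ Finset.range d, k i + ∑ i ∈ J₀, k i :=
        Nat.add_lt_add_of_lt_of_le hbig h2
    _ = ∑ i ∈ Finset.range d, s i * k i := hsum.symm
    _ ≤ _ := h1
  have := Nat.lt_of_mul_lt_mul_right key
  omega
end

section
/- Let k_1 ≤ k_2 ≤ ... ≤ k_m be positive integers and let d be an integer with 1 ≤ d ≤ m such that Σ_{i=1}^d k_i > (d-1)·k_d. Then every m-tuple (s_1, ..., s_m) of non-negative integers satisfying s_i ≤ 1 for all i with d < i ≤ m and Σ_{i=1}^m s_i·k_i = Σ_{i=1}^m k_i has Σ_{i=1}^m s_i ≥ m. -/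
/-- Full combinatorial core of Theorem `t:reallength2`: indices `0, …, m-1` here
correspond to `1, …, m` in the paper.  If `k` is nondecreasing and positive on
`{0, …, m-1}`, `1 ≤ d ≤ m`, and `∑_{i<d} k i > (d-1) * k (d-1)`, then every
tuple of non-negative integers `s` with `s i ≤ 1` for `d ≤ i < m` and
`∑_{i<m} s i * k i = ∑_{i<m} k i` satisfies `∑_{i<m} s i ≥ m`. -/
theorem stmt4 (m d : ℕ) (hd1 : 1 ≤ d) (hdm : d ≤ m) (k : ℕ → ℕ)
    (hkpos : ∀ i, i < m → 0 < k i)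
    (hkmono : ∀ i j, i ≤ j → j < m → k i ≤ k j)
    (hbig : (d - 1) * k (d - 1) < ∑ i ∈ Finset.range d, k i)
    (s : ℕ → ℕ) (hs1 : ∀ i, d ≤ i → i < m → s i ≤ 1)
    (hsum : ∑ i ∈ Finset.range m, s i * k i = ∑ i ∈ Finset.range m, k i) :
    m ≤ ∑ i ∈ Finset.range m, s i := by
  classical
  have hdm1 : d - 1 < m := lt_of_lt_of_le (Nat.sub_lt hd1 one_pos) hdm
  have hkd : 0 < k (d - 1) := hkpos _ hdm1
  set J0 := (Finset.Ico d m).filter (fun i => s i = 0) with hJ0def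
  set J1 := (Finset.Ico d m).filter (fun i => ¬ s i = 0) with hJ1def
  -- splitting sums over range m
  have hsplit : ∀ f : ℕ → ℕ, ∑ i ∈ Finset.range m, f i
      = ∑ i ∈ Finset.range d, f i + ∑ i ∈ Finset.Ico d m, f i := by
    intro f
    rw [Finset.range_eq_Ico, Finset.range_eq_Ico]
    exact (Finset.sum_Ico_consecutive f (Nat.zero_le d) hdm).symm
  have hsplitJ : ∀ f : ℕ → ℕ, ∑ i ∈ Finset.Ico d m, f i
      = ∑ i ∈ J0, f i + ∑ i ∈ J1, f i := by
    intro f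
    rw [hJ0def, hJ1def, Finset.sum_filter_add_sum_filter_not]
  have hJ1one : ∀ i ∈ J1, s i = 1 := by
    intro i hi
    rw [hJ1def, Finset.mem_filter, Finset.mem_Ico] at hi
    have := hs1 i hi.1.1 hi.1.2
    omega
  have hJ0zero : ∀ i ∈ J0, s i = 0 := by
    intro i hi
    rw [hJ0def, Finset.mem_filter] at hi
    exact hi.2
  have hIcoSK : ∑ i ∈ Finset.Ico d m, s i * k i = ∑ i ∈ J1, k i := by
    have e0 : ∑ i ∈ J0, s i * k i = 0 :=
      Finset.sum_eq_zero fun i hi => by rw [hJ0zero i hi, zero_mul]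
    have e1 : ∑ i ∈ J1, s i * k i = ∑ i ∈ J1, k i :=
      Finset.sum_congr rfl fun i hi => by rw [hJ1one i hi, one_mul]
    rw [hsplitJ (fun i => s i * k i), e0, e1, zero_add]
  have hIcoS : ∑ i ∈ Finset.Ico d m, s i = J1.card := by
    have e0 : ∑ i ∈ J0, s i = 0 := Finset.sum_eq_zero hJ0zero
    have e1 : ∑ i ∈ J1, s i = J1.card := by
      rw [Finset.sum_congr rfl hJ1one, Finset.sum_const, smul_eq_mul, mul_one]
    rw [hsplitJ s, e0, e1, zero_add]
  have hcard : J0.card + J1.card = m - d := by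
    rw [hJ0def, hJ1def, Finset.card_filter_add_card_filter_not,
      Nat.card_Ico]
  -- key identity
  have key : ∑ i ∈ Finset.range d, s i * k i
      = ∑ i ∈ Finset.range d, k i + ∑ i ∈ J0, k i := by
    have h1 := hsplit (fun i => s i * k i)
    have h2 := hsplit k
    have h3 := hsplitJ k
    omega
  -- upper bound
  have hA : ∑ i ∈ Finset.range d, s i * k i
      ≤ (∑ i ∈ Finset.range d, s i) * k (d - 1) := by
    rw [Finset.sum_mul]
    refine Finset.sum_le_sum fun i hi => ?_
    have hid : i < d := Finset.mem_range.mp hi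
    exact Nat.mul_le_mul_left (s i) (hkmono i (d - 1) (by omega) hdm1)
  -- lower bound on J0 sum
  have hC : J0.card * k (d - 1) ≤ ∑ i ∈ J0, k i := by
    calc J0.card * k (d - 1) = ∑ _i ∈ J0, k (d - 1) := by
          rw [Finset.sum_const, smul_eq_mul]
      _ ≤ ∑ i ∈ J0, k i := by
          refine Finset.sum_le_sum fun i hi => ?_
          rw [hJ0def, Finset.mem_filter, Finset.mem_Ico] at hi
          exact hkmono (d - 1) i (by omega) hi.1.2
  have hlt : (d - 1 + J0.card) * k (d - 1)
      < (∑ i ∈ Finset.range d, s i) * k (d - 1) := by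
    calc (d - 1 + J0.card) * k (d - 1)
        = (d - 1) * k (d - 1) + J0.card * k (d - 1) := by ring
      _ < ∑ i ∈ Finset.range d, k i + ∑ i ∈ J0, k i := by
          exact Nat.add_lt_add_of_lt_of_le hbig hC
      _ = ∑ i ∈ Finset.range d, s i * k i := key.symm
      _ ≤ _ := hA
  have hS : d - 1 + J0.card < ∑ i ∈ Finset.range d, s i :=
    Nat.lt_of_mul_lt_mul_right hlt
  have htot := hsplit s
  omega
end
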